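/- Let Ω = ⊕_{p≥0} Ω_p be an ℕ-graded associative unital ring, let d : Ω → Ω be an additive map with d(Ω_p) ⊆ Ω_{p+1} for all p, and let M be a left Ω-module; let Ω₊M denote the Ω-submodule of M generated by {α·ω : p ≥ 1, α ∈ Ω_p, ω ∈ M}. Let D : M → M be an additive map satisfying the Leibniz rule D(α·ω) = d(α)·ω + (−1)^p α·D(ω) for all p, α ∈ Ω_p, ω ∈ M, and let u : M → M be an Ω-module automorphism such that u(ω) − ω ∈ Ω₊M for every ω ∈ M. Then for every ω ∈ M, u⁻¹(D(u(ω))) − D(ω) ∈ Ω₊M. -/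
import Mathlib


/-- Let `Ω = ⊕_{p≥0} Ω_p` be an ℕ-graded ring, `d` an additive map raising degree by one,
`M` a left `Ω`-module, `Ω₊M` the `Ω`-submodule generated by
`{α·ω : p ≥ 1, α ∈ Ω_p, ω ∈ M}`, and `D : M →+ M` an additive map satisfying the Leibniz
rule. If `u` is an `Ω`-module automorphism of `M` with `u(ω) - ω ∈ Ω₊M` for all `ω`
(a gauge transformation), then `u⁻¹(D(u(ω))) - D(ω) ∈ Ω₊M` for all `ω`: gauge-equivalent
representations up to homotopy induce the same differential on `M / Ω₊M`. -/
theorem gauge_equivalent_same_induced_differential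
    {A : Type*} [Ring A] (𝒜 : ℕ → AddSubgroup A) [GradedRing 𝒜]
    {M : Type*} [AddCommGroup M] [Module A M]
    (d : A →+ A) (hd : ∀ (p : ℕ), ∀ a ∈ 𝒜 p, d a ∈ 𝒜 (p + 1))
    (D : M →+ M)
    (hD : ∀ (p : ℕ) (α : A), α ∈ 𝒜 p → ∀ ω : M,
      D (α • ω) = d α • ω + ((-1 : ℤ) ^ p) • (α • D ω))
    (u : M ≃ₗ[A] M)
    (hu : ∀ ω : M, u ω - ω ∈ Submodule.span A
      {m : M | ∃ (p : ℕ), 1 ≤ p ∧ ∃ α ∈ 𝒜 p, ∃ ω' : M, m = α • ω'}) :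
    ∀ ω : M, u.symm (D (u ω)) - D ω ∈ Submodule.span A
      {m : M | ∃ (p : ℕ), 1 ≤ p ∧ ∃ α ∈ 𝒜 p, ∃ ω' : M, m = α • ω'} := by
  set s : Set M := {m : M | ∃ (p : ℕ), 1 ≤ p ∧ ∃ α ∈ 𝒜 p, ∃ ω' : M, m = α • ω'} with hs
  set N : Submodule A M := Submodule.span A s with hN
  -- D of a homogeneous generator lands back in N (uses degree ≥ 1 in both Leibniz terms)
  have key : ∀ (p : ℕ) (α : A), α ∈ 𝒜 p → 1 ≤ p → ∀ x : M, D (α • x) ∈ N := by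
    intro p α hα hp x
    rw [hD p α hα x]
    refine add_mem (Submodule.subset_span ?_) (zsmul_mem (Submodule.subset_span ?_) _)
    · exact ⟨p + 1, by omega, d α, hd p α hα, x, rfl⟩
    · exact ⟨p, hp, α, hα, D x, rfl⟩
  -- N is stable under D
  have DN : ∀ x ∈ N, D x ∈ N := by
    intro x hx
    refine Submodule.span_induction ?_ ?_ ?_ ?_ hx
    · rintro m ⟨p, hp, α, hα, ω', rfl⟩
      exact key p α hα hp ω'
    · simp
    · intro y z _ _ hy hz
      rw [map_add]; exact add_mem hy hz
    · intro a y _ hy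
      classical
      -- decompose a into homogeneous pieces
      have ha := DirectSum.sum_support_decompose 𝒜 a
      rw [← ha, Finset.sum_smul, map_sum]
      refine Submodule.sum_mem _ ?_
      intro q _
      have hq : ((DirectSum.decompose 𝒜 a q : 𝒜 q) : A) ∈ 𝒜 q := (DirectSum.decompose 𝒜 a q).2
      rw [hD q _ hq y]
      refine add_mem (Submodule.subset_span ?_)
        (zsmul_mem (Submodule.smul_mem _ _ hy) _)
      exact ⟨q + 1, by omega, _, hd q _ hq, y, rfl⟩
  -- u.symm also moves elements by N
  have husymm : ∀ y : M, u.symm y - y ∈ N := by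
    intro y
    have := hu (u.symm y)
    rw [u.apply_symm_apply] at this
    have : -(y - u.symm y) ∈ N := neg_mem this
    simpa using this
  intro ω
  have h1 : u.symm (D (u ω)) - D (u ω) ∈ N := husymm _
  have h2 : D (u ω) - D ω ∈ N := by
    have := DN _ (hu ω)
    rwa [map_sub] at this
  have := add_mem h1 h2
  simpa using this
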